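/- Let n ≥ 1 and let 𝓕 = (F_1, …, F_m) be a finite sequence of simple graphs, each with fewer than n vertices. If G and G' are n-vertex simple graphs and G' is a reconstruction of G, then Σ_H c(𝓕, H) · s(H, G') = Σ_H c(𝓕, H) · s(H, G), where each sum is over all isomorphism classes H of n-vertex simple graphs. -/

import Mathlib

open SimpleGraph

/-- The vertex-deleted subgraph `G − v`: the induced subgraph of `G` obtained by
deleting `v` and all edges incident with `v`. -/
abbrev vdel {n : ℕ} (G : SimpleGraph (Fin n)) (v : Fin n) :
    SimpleGraph ({v}ᶜ : Set (Fin n)) :=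
  G.induce {v}ᶜ

/-- `H` is a reconstruction of `G`: there is a bijection `f` between the vertex
sets such that `G − v ≅ H − f v` for every vertex `v`. -/
def IsReconstruction {n : ℕ} (G H : SimpleGraph (Fin n)) : Prop :=
  ∃ f : Fin n ≃ Fin n, ∀ v : Fin n, Nonempty (vdel G v ≃g vdel H (f v))

/-- `s(F,G)`: the number of subgraphs of `G` isomorphic to `F`. -/
noncomputable def subCount {k n : ℕ} (F : SimpleGraph (Fin k))
    (G : SimpleGraph (Fin n)) : ℕ :=
  Nat.card {H : G.Subgraph // Nonempty (F ≃g H.coe)}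

/-- A finite sequence of simple graphs (on arbitrary finite vertex sets). -/
abbrev GSeq : Type := List (Σ k : ℕ, SimpleGraph (Fin k))

/-- `c(𝓕,G)`: the number of covers of `G` by the sequence `L`, i.e. of sequences
of subgraphs of `G`, the `i`-th being isomorphic to the `i`-th graph of `L`,
whose union (of both vertex sets and edge sets) is all of `G`. -/
noncomputable def coverCount {n : ℕ} (L : GSeq) (G : SimpleGraph (Fin n)) : ℕ :=
  Nat.card {C : Fin L.length → G.Subgraph //
    (∀ i, Nonempty ((L.get i).2 ≃g (C i).coe)) ∧ (⨆ i, C i) = ⊤}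

namespace Kocay

instance {V : Type*} [Finite V] {G : SimpleGraph V} : Finite G.Subgraph :=
  Finite.of_injective (fun K => (K.verts, K.Adj))
    (fun a b h => by
      obtain ⟨h1, h2⟩ := Prod.mk.injEq .. ▸ h
      exact SimpleGraph.Subgraph.ext h1 h2)

lemma nat_card_sigma {ι : Type*} [Fintype ι] (B : ι → Type*) [∀ i, Finite (B i)] :
    Nat.card (Σ i, B i) = ∑ i, Nat.card (B i) := by
  letI : ∀ i, Fintype (B i) := fun i => Fintype.ofFinite _
  simp [Nat.card_eq_fintype_card, Fintype.card_sigma]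

/-- transport of subgraphs along a graph isomorphism -/
def isoSub {V W : Type*} {A : SimpleGraph V} {B : SimpleGraph W} (e : A ≃g B) :
    A.Subgraph → B.Subgraph := fun K =>
  { verts := ⇑e '' K.verts
    Adj := fun a b => K.Adj (e.symm a) (e.symm b)
    adj_sub := fun {a b} h => by
      have := K.adj_sub h
      have h2 := e.map_adj_iff (v := e.symm a) (w := e.symm b)
      simpa using h2.mpr this
    edge_vert := fun {a b} h => ⟨e.symm a, K.edge_vert h, by simp⟩
    symm := ⟨fun a b h => K.adj_symm h⟩ }

lemma isoSub_leftinv {V W : Type*} {A : SimpleGraph V} {B : SimpleGraph W} (e : A ≃g B)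
    (K : A.Subgraph) : isoSub e.symm (isoSub e K) = K := by
  ext a b
  · simp [isoSub]
  · simp [isoSub]

def subEquiv {V W : Type*} {A : SimpleGraph V} {B : SimpleGraph W} (e : A ≃g B) :
    A.Subgraph ≃ B.Subgraph where
  toFun := isoSub e
  invFun := isoSub e.symm
  left_inv := isoSub_leftinv e
  right_inv := fun K => by simpa using isoSub_leftinv e.symm K

def coeIso {V W : Type*} {A : SimpleGraph V} {B : SimpleGraph W} (e : A ≃g B)
    (K : A.Subgraph) : K.coe ≃g (isoSub e K).coe where
  toEquiv := e.toEquiv.image K.verts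
  map_rel_iff' := by
    rintro ⟨a, ha⟩ ⟨b, hb⟩
    simp [isoSub, Equiv.image]
    show K.Adj (e.symm (e a)) (e.symm (e b)) ↔ K.Adj a b
    simp

lemma isoSub_iSup {V W : Type*} {A : SimpleGraph V} {B : SimpleGraph W} (e : A ≃g B)
    {ι : Sort*} (C : ι → A.Subgraph) : isoSub e (⨆ i, C i) = ⨆ i, isoSub e (C i) := by
  ext a b
  · simp [isoSub, Subgraph.verts_iSup, Set.image_iUnion]
  · simp [isoSub, Subgraph.iSup_adj]

lemma isoSub_top {V W : Type*} {A : SimpleGraph V} {B : SimpleGraph W} (e : A ≃g B) :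
    isoSub e (⊤ : A.Subgraph) = ⊤ := by
  ext a b
  · simp [isoSub]
  · simp only [isoSub, Subgraph.top_adj]
    have h2 := e.map_adj_iff (v := e.symm a) (w := e.symm b)
    simp at h2
    exact h2.symm

lemma isoSub_verts_ncard {V W : Type*} {A : SimpleGraph V} {B : SimpleGraph W} (e : A ≃g B)
    (K : A.Subgraph) : (isoSub e K).verts.ncard = K.verts.ncard :=
  Set.ncard_image_of_injective _ e.toEquiv.injective

variable {V : Type*} {G : SimpleGraph V} {s : Set V}

/-- a subgraph of the induced graph `G[s]`, pushed forward to a subgraph of `G`. -/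
def pushSub (G : SimpleGraph V) (s : Set V) (K : (G.induce s).Subgraph) : G.Subgraph where
  verts := Subtype.val '' K.verts
  Adj := fun a b => ∃ (ha : a ∈ s) (hb : b ∈ s), K.Adj ⟨a, ha⟩ ⟨b, hb⟩
  adj_sub := fun ⟨ha, hb, h⟩ => K.adj_sub h
  edge_vert := fun ⟨ha, _, h⟩ => ⟨⟨_, ha⟩, K.edge_vert h, rfl⟩
  symm := ⟨fun a b ⟨ha, hb, h⟩ => ⟨hb, ha, K.adj_symm h⟩⟩

def induceEquiv (G : SimpleGraph V) (s : Set V) :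
    (G.induce s).Subgraph ≃ {K : G.Subgraph // K.verts ⊆ s} where
  toFun K := ⟨pushSub G s K, by rintro a ⟨⟨x, hx⟩, _, rfl⟩; exact hx⟩
  invFun K :=
    { verts := Subtype.val ⁻¹' K.1.verts
      Adj := fun a b => K.1.Adj a b
      adj_sub := fun h => K.1.adj_sub h
      edge_vert := fun h => K.1.edge_vert h
      symm := ⟨fun a b h => K.1.adj_symm h⟩ }
  left_inv K := by
    ext a b
    · simp [pushSub]
    · obtain ⟨a, ha⟩ := a; obtain ⟨b, hb⟩ := b
      simp only [pushSub]
      exact ⟨fun ⟨_, _, h⟩ => h, fun h => ⟨ha, hb, h⟩⟩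
  right_inv K := by
    apply Subtype.ext
    ext a b
    · simp only [pushSub, Set.mem_image, Set.mem_preimage, Subtype.exists,
        exists_and_right, exists_eq_right]
      exact ⟨fun ⟨_, h⟩ => h, fun h => ⟨K.2 h, h⟩⟩
    · simp only [pushSub]
      constructor
      · rintro ⟨_, _, h⟩; exact h
      · intro h
        exact ⟨K.2 (K.1.edge_vert h), K.2 (K.1.edge_vert (K.1.adj_symm h)), h⟩

lemma pushSub_verts (K : (G.induce s).Subgraph) :
    (pushSub G s K).verts = Subtype.val '' K.verts := rfl

lemma pushSub_ncard (K : (G.induce s).Subgraph) :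
    (pushSub G s K).verts.ncard = K.verts.ncard :=
  Set.ncard_image_of_injective _ Subtype.val_injective

noncomputable def pushCoeIso (K : (G.induce s).Subgraph) : K.coe ≃g (pushSub G s K).coe where
  toEquiv := Equiv.Set.image Subtype.val K.verts Subtype.val_injective
  map_rel_iff' := by
    rintro ⟨⟨a, has⟩, ha⟩ ⟨⟨b, hbs⟩, hb⟩
    simp only [Equiv.Set.image, Equiv.Set.imageOfInjOn, Equiv.coe_fn_mk,
      Subgraph.coe_adj, pushSub]
    constructor
    · rintro ⟨_, _, h⟩; exact h
    · intro h; exact ⟨has, hbs, h⟩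

lemma pushSub_iSup {ι : Sort*} (C : ι → (G.induce s).Subgraph) :
    (⨆ i, pushSub G s (C i)).verts = Subtype.val '' (⨆ i, C i).verts := by
  simp [Subgraph.verts_iSup, pushSub_verts, Set.image_iUnion]

/-- subgraph of `K.spanningCoe` to subgraph of `G`. -/
def downSub (K : G.Subgraph) (D : K.spanningCoe.Subgraph) : G.Subgraph where
  verts := D.verts
  Adj := D.Adj
  adj_sub := fun h => K.adj_sub (D.adj_sub h)
  edge_vert := D.edge_vert
  symm := D.symm

def upSub (K : G.Subgraph) (K' : G.Subgraph) (h : K' ≤ K) : K.spanningCoe.Subgraph where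
  verts := K'.verts
  Adj := K'.Adj
  adj_sub := @fun a b hab => h.2 hab
  edge_vert := K'.edge_vert
  symm := K'.symm

lemma downSub_le {K : G.Subgraph} (h : K.verts = Set.univ) (D : K.spanningCoe.Subgraph) :
    downSub K D ≤ K :=
  ⟨by rw [h]; exact Set.subset_univ _, @fun a b hab => D.adj_sub hab⟩

def downCoeIso (K : G.Subgraph) (D : K.spanningCoe.Subgraph) :
    D.coe ≃g (downSub K D).coe where
  toEquiv := Equiv.refl _
  map_rel_iff' := Iff.rfl

def upCoeIso (K K' : G.Subgraph) (h : K' ≤ K) : K'.coe ≃g (upSub K K' h).coe where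
  toEquiv := Equiv.refl _
  map_rel_iff' := Iff.rfl

lemma downSub_iSup_iff {K : G.Subgraph} (h : K.verts = Set.univ) {ι : Sort*}
    (D : ι → Subgraph K.spanningCoe) :
    (⨆ i, downSub K (D i)) = K ↔ (⨆ i, D i) = ⊤ := by
  have hv : (⨆ i, downSub K (D i)).verts = (⨆ i, D i).verts := by
    simp [Subgraph.verts_iSup, downSub]
  have hA : ∀ a b, ((⨆ i, downSub K (D i)).Adj a b ↔ (⨆ i, D i).Adj a b) := by
    intro a b
    simp [Subgraph.iSup_adj, downSub]
  have hsc : ∀ a b, (K.spanningCoe.Adj a b ↔ K.Adj a b) := fun a b => Iff.rfl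
  constructor
  · intro he
    ext a b
    · rw [← hv, he, h]; simp
    · rw [Subgraph.top_adj, ← hA a b, he, hsc]
  · intro he
    ext a b
    · rw [hv, he, h]; simp
    · rw [hA a b, he, Subgraph.top_adj, hsc]

lemma up_down (K : G.Subgraph) (D : K.spanningCoe.Subgraph) (h') :
    upSub K (downSub K D) h' = D := by
  ext a b <;> simp [upSub, downSub]

lemma down_up (K K' : G.Subgraph) (h : K' ≤ K) :
    downSub K (upSub K K' h) = K' := by
  ext a b <;> simp [upSub, downSub]


/-! ### Counting functions -/

/-- number of subgraphs of `G` isomorphic to `F` (general vertex type). -/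
noncomputable def sc {k : ℕ} (F : SimpleGraph (Fin k)) (G : SimpleGraph V) : ℕ :=
  Nat.card {K : G.Subgraph // Nonempty (F ≃g K.coe)}

/-- number of tuples of subgraphs, the `i`-th isomorphic to `L.get i`, whose union
has `k` vertices. -/
noncomputable def tk (L : GSeq) (k : ℕ) (G : SimpleGraph V) : ℕ :=
  Nat.card {C : Fin L.length → G.Subgraph //
    (∀ i, Nonempty ((L.get i).2 ≃g (C i).coe)) ∧ (⨆ i, C i).verts.ncard = k}

/-- number of all tuples of subgraphs, the `i`-th isomorphic to `L.get i`. -/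
noncomputable def tN (L : GSeq) (G : SimpleGraph V) : ℕ :=
  Nat.card {C : Fin L.length → G.Subgraph //
    ∀ i, Nonempty ((L.get i).2 ≃g (C i).coe)}

/-- `coverCount`, generalized to arbitrary vertex types. -/
noncomputable def cc (L : GSeq) (G : SimpleGraph V) : ℕ :=
  Nat.card {C : Fin L.length → G.Subgraph //
    (∀ i, Nonempty ((L.get i).2 ≃g (C i).coe)) ∧ (⨆ i, C i) = ⊤}

lemma cc_eq_coverCount {n : ℕ} (L : GSeq) (G : SimpleGraph (Fin n)) :
    cc L G = coverCount L G := rfl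

lemma ncard_of_iso {k : ℕ} {F : SimpleGraph (Fin k)} {G : SimpleGraph V} {K : G.Subgraph}
    (e : F ≃g K.coe) : K.verts.ncard = k := by
  have h := Nat.card_congr e.toEquiv.symm
  rw [← Nat.card_coe_set_eq, h, Nat.card_eq_fintype_card, Fintype.card_fin]

/-! ### Isomorphism invariance -/

variable {W : Type*} {A : SimpleGraph V} {B : SimpleGraph W}

lemma tk_iso (e : A ≃g B) (L : GSeq) (k : ℕ) : tk L k A = tk L k B := by
  apply Nat.card_congr
  apply Equiv.subtypeEquiv (Equiv.piCongrRight fun _ : Fin L.length => subEquiv e)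
  intro C
  simp only [Equiv.piCongrRight_apply, Pi.map_apply]
  constructor
  · rintro ⟨h1, h2⟩
    refine ⟨fun i => (h1 i).map (fun f => f.trans (coeIso e (C i))), ?_⟩
    show (⨆ i, isoSub e (C i)).verts.ncard = k
    rw [← isoSub_iSup, isoSub_verts_ncard]
    exact h2
  · rintro ⟨h1, h2⟩
    refine ⟨fun i => (h1 i).map (fun f => f.trans (coeIso e (C i)).symm), ?_⟩
    rw [show (⨆ i, subEquiv e (C i)) = isoSub e (⨆ i, C i) from (isoSub_iSup e C).symm,
      isoSub_verts_ncard] at h2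
    exact h2

lemma cc_iso (e : A ≃g B) (L : GSeq) : cc L A = cc L B := by
  apply Nat.card_congr
  apply Equiv.subtypeEquiv (Equiv.piCongrRight fun _ : Fin L.length => subEquiv e)
  intro C
  simp only [Equiv.piCongrRight_apply, Pi.map_apply]
  have hsup : (⨆ i, isoSub e (C i)) = isoSub e (⨆ i, C i) := (isoSub_iSup e C).symm
  constructor
  · rintro ⟨h1, h2⟩
    refine ⟨fun i => (h1 i).map (fun f => f.trans (coeIso e (C i))), ?_⟩
    show (⨆ i, isoSub e (C i)) = ⊤
    rw [hsup, h2, isoSub_top]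
  · rintro ⟨h1, h2⟩
    refine ⟨fun i => (h1 i).map (fun f => f.trans (coeIso e (C i)).symm), ?_⟩
    have h3 : isoSub e (⨆ i, C i) = isoSub e ⊤ := by
      rw [← hsup, isoSub_top]
      exact h2
    exact (subEquiv e).injective h3

/-- `sc` as a `tk` of a one-element sequence. -/
lemma sc_eq_tk {k : ℕ} (F : SimpleGraph (Fin k)) (G : SimpleGraph V) :
    sc F G = tk [⟨k, F⟩] k G := by
  have huniq : ∀ i : Fin ([⟨k, F⟩] : GSeq).length, i = ⟨0, Nat.one_pos⟩ := by
    intro i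
    apply Fin.ext
    have hi : (i : ℕ) < 1 := i.isLt
    simpa using Nat.lt_one_iff.mp hi
  haveI : Nonempty (Fin ([⟨k, F⟩] : GSeq).length) := ⟨⟨0, Nat.one_pos⟩⟩
  apply Nat.card_congr
  refine ⟨fun K => ⟨fun _ => K.1, fun i => ?_, ?_⟩,
    fun C => ⟨C.1 ⟨0, Nat.one_pos⟩, C.2.1 ⟨0, Nat.one_pos⟩⟩, fun K => rfl, ?_⟩
  · rw [huniq i]
    exact K.2
  · rw [iSup_const]
    exact K.2.elim fun e => ncard_of_iso e
  · rintro ⟨C, hC⟩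
    apply Subtype.ext
    funext i
    show C ⟨0, Nat.one_pos⟩ = C i
    rw [huniq i]

/-! ### Decomposition and product formulas -/

lemma tN_eq_sum [Fintype V] (L : GSeq) (G : SimpleGraph V) :
    tN L G = ∑ k ∈ Finset.range (Fintype.card V + 1), tk L k G := by
  classical
  have e : {C : Fin L.length → G.Subgraph // ∀ i, Nonempty ((L.get i).2 ≃g (C i).coe)}
      ≃ Σ k : Fin (Fintype.card V + 1),
        {C : Fin L.length → G.Subgraph //
          (∀ i, Nonempty ((L.get i).2 ≃g (C i).coe)) ∧ (⨆ i, C i).verts.ncard = k} := by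
    refine ⟨fun C => ⟨⟨(⨆ i, C.1 i).verts.ncard, ?_⟩, C.1, C.2, rfl⟩,
      fun x => ⟨x.2.1, x.2.2.1⟩, fun C => rfl, ?_⟩
    · have := Set.ncard_le_ncard (Set.subset_univ (⨆ i, C.1 i).verts) Set.finite_univ
      rw [Set.ncard_univ, Nat.card_eq_fintype_card] at this
      omega
    · rintro ⟨⟨k, hk⟩, C, h1, h2⟩
      have h2' : (⨆ i, C i).verts.ncard = k := h2
      subst h2'
      rfl
  rw [tN, Nat.card_congr e, nat_card_sigma, ← Fin.sum_univ_eq_sum_range]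
  rfl

lemma tN_eq_prod (L : GSeq) (G : SimpleGraph V) :
    tN L G = ∏ i : Fin L.length, sc (L.get i).2 G := by
  rw [tN, Nat.card_congr (Equiv.subtypePiEquivPi
    (p := fun i (K : G.Subgraph) => Nonempty ((L.get i).2 ≃g K.coe))), Nat.card_pi]
  rfl

/-! ### Kelly-style counting -/

/-- pull a tuple of subgraphs supported in `s` back to the induced graph on `s`. -/
noncomputable def pullTuple {m : ℕ} {s : Set V} (G : SimpleGraph V)
    (C : Fin m → G.Subgraph) (h : ∀ i, (C i).verts ⊆ s) :
    Fin m → (G.induce s).Subgraph :=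
  fun i => (induceEquiv G s).symm ⟨C i, h i⟩

lemma pushSub_pullTuple {m : ℕ} {s : Set V} (G : SimpleGraph V)
    (C : Fin m → G.Subgraph) (h : ∀ i, (C i).verts ⊆ s) (i : Fin m) :
    pushSub G s (pullTuple G C h i) = C i :=
  congrArg Subtype.val ((induceEquiv G s).apply_symm_apply ⟨C i, h i⟩)

/-- tuples in an induced subgraph correspond to tuples supported inside `s`. -/
lemma tk_induce_eq (L : GSeq) (k : ℕ) (G : SimpleGraph V) (s : Set V) :
    tk L k (G.induce s) = Nat.card {C : Fin L.length → G.Subgraph //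
      ((∀ i, Nonempty ((L.get i).2 ≃g (C i).coe)) ∧ (⨆ i, C i).verts.ncard = k)
        ∧ (⨆ i, C i).verts ⊆ s} := by
  apply Nat.card_congr
  have hle : ∀ (C : {C : Fin L.length → G.Subgraph //
      ((∀ i, Nonempty ((L.get i).2 ≃g (C i).coe)) ∧ (⨆ i, C i).verts.ncard = k)
        ∧ (⨆ i, C i).verts ⊆ s}) (i : Fin L.length), (C.1 i).verts ⊆ s := by
    intro C i
    refine subset_trans ?_ C.2.2
    rw [Subgraph.verts_iSup]
    exact Set.subset_iUnion (fun j => (C.1 j).verts) i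
  refine ⟨fun C' => ⟨fun i => pushSub G s (C'.1 i), ⟨fun i => (C'.2.1 i).map
      (fun f => f.trans (pushCoeIso (C'.1 i))), ?_⟩, ?_⟩,
    fun C => ⟨pullTuple G C.1 (hle C), fun i => ?_, ?_⟩, ?_, ?_⟩
  · rw [pushSub_iSup, Set.ncard_image_of_injective _ Subtype.val_injective]
    exact C'.2.2
  · rw [pushSub_iSup]
    rintro a ⟨x, _, rfl⟩
    exact x.2
  · refine (C.2.1.1 i).map (fun f => f.trans ?_)
    exact pushSub_pullTuple G C.1 (hle C) i ▸ (pushCoeIso (pullTuple G C.1 (hle C) i)).symm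
  · have hps : (⨆ i, pushSub G s (pullTuple G C.1 (hle C) i)) = ⨆ i, C.1 i :=
      iSup_congr (pushSub_pullTuple G C.1 (hle C))
    have himg := pushSub_iSup (pullTuple G C.1 (hle C))
    rw [hps] at himg
    have h5 := C.2.1.2
    rw [himg, Set.ncard_image_of_injective _ Subtype.val_injective] at h5
    exact h5
  · intro C'
    apply Subtype.ext
    funext i
    apply (induceEquiv G s).injective
    apply Subtype.ext
    exact pushSub_pullTuple G _ _ i
  · intro C
    apply Subtype.ext
    funext i
    exact pushSub_pullTuple G C.1 (hle C) i

lemma kelly_tk [Fintype V] (L : GSeq) {k : ℕ} (hk : k < Fintype.card V)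
    (G : SimpleGraph V) :
    (Fintype.card V - k) * tk L k G
      = ∑ v : V, tk L k (G.induce ({v}ᶜ : Set V)) := by
  classical
  simp_rw [tk_induce_eq]
  rw [← nat_card_sigma]
  set Q : (Fin L.length → G.Subgraph) → Prop := fun C =>
    (∀ i, Nonempty ((L.get i).2 ≃g (C i).coe)) ∧ (⨆ i, C i).verts.ncard = k with hQ
  have e : (Σ v : V, {C : Fin L.length → G.Subgraph //
        Q C ∧ (⨆ i, C i).verts ⊆ ({v}ᶜ : Set V)})
      ≃ Σ C : {C : Fin L.length → G.Subgraph // Q C},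
        {v : V // (⨆ i, C.1 i).verts ⊆ ({v}ᶜ : Set V)} :=
    ⟨fun x => ⟨⟨x.2.1, x.2.2.1⟩, x.1, x.2.2.2⟩,
     fun x => ⟨x.2.1, x.1.1, x.1.2, x.2.2⟩, fun x => rfl, fun x => rfl⟩
  rw [Nat.card_congr e]
  letI : Fintype {C : Fin L.length → G.Subgraph // Q C} := Fintype.ofFinite _
  rw [nat_card_sigma]
  have hfib : ∀ C : {C : Fin L.length → G.Subgraph // Q C},
      Nat.card {v : V // (⨆ i, C.1 i).verts ⊆ ({v}ᶜ : Set V)}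
        = Fintype.card V - k := by
    intro C
    have h1 : Nat.card {v : V // (⨆ i, C.1 i).verts ⊆ ({v}ᶜ : Set V)}
        = Nat.card ((⨆ i, C.1 i).vertsᶜ : Set V) := by
      apply Nat.card_congr
      apply Equiv.subtypeEquivRight
      intro v
      simp [Set.subset_compl_singleton_iff]
    rw [h1, Nat.card_coe_set_eq]
    have h2 := Set.ncard_add_ncard_compl (⨆ i, C.1 i).verts
    rw [C.2.2, Nat.card_eq_fintype_card] at h2
    omega
  rw [Finset.sum_congr rfl (fun C _ => hfib C), Finset.sum_const, smul_eq_mul,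
    mul_comm]
  congr 1
  rw [tk, Nat.card_eq_fintype_card, ← Finset.card_univ]

/-! ### Reconstruction invariance -/

lemma tk_recon {n : ℕ} {G G' : SimpleGraph (Fin n)} (hrec : IsReconstruction G G')
    (L : GSeq) {k : ℕ} (hk : k < n) : tk L k G = tk L k G' := by
  obtain ⟨f, hf⟩ := hrec
  have hc : Fintype.card (Fin n) = n := Fintype.card_fin n
  have h1 := kelly_tk L (k := k) (by rw [hc]; exact hk) G
  have h2 := kelly_tk L (k := k) (by rw [hc]; exact hk) G'
  have h3 : ∀ v : Fin n, tk L k (G.induce ({v}ᶜ : Set (Fin n)))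
      = tk L k (G'.induce ({f v}ᶜ : Set (Fin n))) := by
    intro v
    exact (hf v).elim fun e => tk_iso e L k
  have h4 : ∑ v : Fin n, tk L k (G'.induce ({f v}ᶜ : Set (Fin n)))
      = ∑ v : Fin n, tk L k (G'.induce ({v}ᶜ : Set (Fin n))) :=
    Equiv.sum_comp f (fun w => tk L k (G'.induce ({w}ᶜ : Set (Fin n))))
  have h5 : (Fintype.card (Fin n) - k) * tk L k G
      = (Fintype.card (Fin n) - k) * tk L k G' := by
    rw [h1, h2, ← h4]
    exact Finset.sum_congr rfl fun v _ => h3 v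
  have hpos : 0 < Fintype.card (Fin n) - k := by omega
  exact Nat.eq_of_mul_eq_mul_left hpos h5

lemma sc_recon {n : ℕ} {G G' : SimpleGraph (Fin n)} (hrec : IsReconstruction G G')
    {k : ℕ} (hk : k < n) (F : SimpleGraph (Fin k)) : sc F G = sc F G' := by
  rw [sc_eq_tk, sc_eq_tk]
  exact tk_recon hrec _ hk

lemma tk_top_recon {n : ℕ} {G G' : SimpleGraph (Fin n)} (hrec : IsReconstruction G G')
    (L : GSeq) (hL : ∀ F ∈ L, F.1 < n) : tk L n G = tk L n G' := by
  have hprod : tN L G = tN L G' := by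
    rw [tN_eq_prod, tN_eq_prod]
    refine Finset.prod_congr rfl fun i _ => ?_
    exact sc_recon hrec (hL (L.get i) (L.get_mem i)) (L.get i).2
  have hsum := tN_eq_sum L G
  have hsum' := tN_eq_sum L G'
  rw [Fintype.card_fin] at hsum hsum'
  rw [Finset.sum_range_succ] at hsum hsum'
  have hlow : ∑ k ∈ Finset.range n, tk L k G = ∑ k ∈ Finset.range n, tk L k G' :=
    Finset.sum_congr rfl fun k hk => tk_recon hrec L (Finset.mem_range.mp hk)
  omega

/-! ### The spanning-tuple count as a sum over isomorphism classes -/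

lemma main_right {n : ℕ} (L : GSeq) (G : SimpleGraph (Fin n))
    (R : Finset (SimpleGraph (Fin n)))
    (hR : ∀ X : SimpleGraph (Fin n), ∃! Y, Y ∈ R ∧ Nonempty (X ≃g Y)) :
    ∑ H ∈ R, coverCount L H * subCount H G = tk L n G := by
  classical
  set rep : G.Subgraph → SimpleGraph (Fin n) :=
    fun K => (hR K.spanningCoe).exists.choose with hrepdef
  have hrep : ∀ K : G.Subgraph, rep K ∈ R ∧ Nonempty (K.spanningCoe ≃g rep K) :=
    fun K => (hR K.spanningCoe).exists.choose_spec
  have spanIso : ∀ (K : G.Subgraph), K.verts = Set.univ → (K.spanningCoe ≃g K.coe) :=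
    fun K h => K.spanningCoeEquivCoeOfSpanning (fun v => h ▸ Set.mem_univ v)
  have hverts : ∀ (H : SimpleGraph (Fin n)) (K : G.Subgraph),
      Nonempty (H ≃g K.coe) → K.verts = Set.univ := by
    intro H K ⟨e⟩
    have h1 : K.verts.ncard = n := ncard_of_iso e
    have h2 : (Set.univ : Set (Fin n)).ncard = n := by
      rw [Set.ncard_univ, Nat.card_eq_fintype_card, Fintype.card_fin]
    exact Set.eq_of_subset_of_ncard_le (Set.subset_univ _) (by omega)
  have hiff : ∀ (H : SimpleGraph (Fin n)), H ∈ R → ∀ K : G.Subgraph,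
      (Nonempty (H ≃g K.coe) ↔ (K.verts = Set.univ ∧ rep K = H)) := by
    intro H hH K
    constructor
    · intro he
      have hv := hverts H K he
      obtain ⟨e⟩ := he
      exact ⟨hv, (hR K.spanningCoe).unique (hrep K)
        ⟨hH, ⟨(spanIso K hv).trans e.symm⟩⟩⟩
    · rintro ⟨hv, hrH⟩
      obtain ⟨e⟩ := (hrep K).2
      rw [hrH] at e
      exact ⟨e.symm.trans (spanIso K hv)⟩
  -- rewrite `tk L n G` as a sum over spanning subgraphs
  have hB : tk L n G = Nat.card {C : Fin L.length → G.Subgraph //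
      (∀ i, Nonempty ((L.get i).2 ≃g (C i).coe)) ∧ (⨆ i, C i).verts = Set.univ} := by
    apply Nat.card_congr
    apply Equiv.subtypeEquivRight
    intro C
    constructor
    · rintro ⟨h1, h2⟩
      refine ⟨h1, ?_⟩
      apply Set.eq_of_subset_of_ncard_le (Set.subset_univ _)
      rw [Set.ncard_univ, Nat.card_eq_fintype_card, Fintype.card_fin, h2]
    · rintro ⟨h1, h2⟩
      refine ⟨h1, ?_⟩
      rw [h2, Set.ncard_univ, Nat.card_eq_fintype_card, Fintype.card_fin]
  have e2 : {C : Fin L.length → G.Subgraph //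
        (∀ i, Nonempty ((L.get i).2 ≃g (C i).coe)) ∧ (⨆ i, C i).verts = Set.univ}
      ≃ Σ K : {K : G.Subgraph // K.verts = Set.univ},
        {C : Fin L.length → G.Subgraph //
          (∀ i, Nonempty ((L.get i).2 ≃g (C i).coe)) ∧ (⨆ i, C i) = K.1} := by
    refine ⟨fun C => ⟨⟨⨆ i, C.1 i, C.2.2⟩, C.1, C.2.1, rfl⟩,
      fun x => ⟨x.2.1, x.2.2.1, by rw [x.2.2.2]; exact x.1.2⟩, fun C => rfl, ?_⟩
    rintro ⟨⟨K, hK⟩, C, hC, hs⟩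
    have hs' : (⨆ i, C i) = K := hs
    subst hs'
    rfl
  -- each fiber is a `coverCount`
  have hD : ∀ K : {K : G.Subgraph // K.verts = Set.univ},
      Nat.card {C : Fin L.length → G.Subgraph //
          (∀ i, Nonempty ((L.get i).2 ≃g (C i).coe)) ∧ (⨆ i, C i) = K.1}
        = coverCount L (rep K.1) := by
    intro K
    have e3 : {D : Fin L.length → K.1.spanningCoe.Subgraph //
          (∀ i, Nonempty ((L.get i).2 ≃g (D i).coe)) ∧ (⨆ i, D i) = ⊤}
        ≃ {C : Fin L.length → G.Subgraph //
          (∀ i, Nonempty ((L.get i).2 ≃g (C i).coe)) ∧ (⨆ i, C i) = K.1} := by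
      refine ⟨fun D => ⟨fun i => downSub K.1 (D.1 i),
          fun i => (D.2.1 i).map (fun f => f.trans (downCoeIso K.1 (D.1 i))),
          (downSub_iSup_iff K.2 D.1).mpr D.2.2⟩,
        fun C => ?_, ?_, ?_⟩
      · have hle : ∀ i, C.1 i ≤ K.1 := fun i => le_trans (le_iSup C.1 i) (le_of_eq C.2.2)
        refine ⟨fun i => upSub K.1 (C.1 i) (hle i), fun i => (C.2.1 i).map
          (fun f => f.trans (upCoeIso K.1 (C.1 i) (hle i))), ?_⟩
        apply (downSub_iSup_iff K.2 _).mp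
        have : ∀ i, downSub K.1 (upSub K.1 (C.1 i) (hle i)) = C.1 i :=
          fun i => down_up K.1 (C.1 i) (hle i)
        rw [iSup_congr this]
        exact C.2.2
      · intro D
        apply Subtype.ext
        funext i
        exact up_down K.1 (D.1 i) (downSub_le K.2 (D.1 i))
      · intro C
        apply Subtype.ext
        funext i
        exact down_up K.1 (C.1 i) (le_trans (le_iSup C.1 i) (le_of_eq C.2.2))
    rw [← Nat.card_congr e3]
    obtain ⟨e⟩ := (hrep K.1).2
    show cc L K.1.spanningCoe = coverCount L (rep K.1)
    rw [cc_iso e L, cc_eq_coverCount]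
  letI : Fintype {K : G.Subgraph // K.verts = Set.univ} := Fintype.ofFinite _
  have hsum : tk L n G
      = ∑ K : {K : G.Subgraph // K.verts = Set.univ}, coverCount L (rep K.1) := by
    rw [hB, Nat.card_congr e2, nat_card_sigma]
    exact Finset.sum_congr rfl fun K _ => hD K
  rw [hsum]
  have hmap : ∀ K : {K : G.Subgraph // K.verts = Set.univ}, K ∈ Finset.univ
      → rep K.1 ∈ R := fun K _ => (hrep K.1).1
  rw [← Finset.sum_fiberwise_of_maps_to hmap (fun K => coverCount L (rep K.1))]
  apply Finset.sum_congr rfl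
  intro H hH
  rw [Finset.sum_congr rfl
    (fun K hK => by rw [(Finset.mem_filter.mp hK).2] :
      ∀ K ∈ Finset.univ.filter
        (fun K : {K : G.Subgraph // K.verts = Set.univ} => rep K.1 = H),
      coverCount L (rep K.1) = coverCount L H)]
  rw [Finset.sum_const, smul_eq_mul, mul_comm]
  congr 1
  rw [← Fintype.card_subtype, ← Nat.card_eq_fintype_card]
  apply Nat.card_congr
  exact ((Equiv.subtypeSubtypeEquivSubtypeInter _ _).trans
    (Equiv.subtypeEquivRight fun K => (hiff H hH K).symm)).symm

end Kocay

theorem stmt_3 {n : ℕ} (hn : 1 ≤ n) (L : GSeq) (hL : ∀ F ∈ L, F.1 < n)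
    (G G' : SimpleGraph (Fin n)) (hrec : IsReconstruction G G')
    (R : Finset (SimpleGraph (Fin n)))
    (hR : ∀ X : SimpleGraph (Fin n), ∃! Y, Y ∈ R ∧ Nonempty (X ≃g Y)) :
    ∑ H ∈ R, coverCount L H * subCount H G' =
      ∑ H ∈ R, coverCount L H * subCount H G := by
  rw [Kocay.main_right L G R hR, Kocay.main_right L G' R hR]
  exact (Kocay.tk_top_recon hrec L hL).symm
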